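/- Let A be an N×N Hermitian positive definite complex matrix, let S be its positive definite square root (so S is Hermitian positive definite and S² = A), and let b ∈ ℂ^N. Define u(x) = exp(−x·S)·S^{−1}·b for x ∈ ℝ. Then: (i) u is twice differentiable with u''(x) = A·u(x) for all x; (ii) u'(0) = −b; and (iii) u(x) → 0 as x → +∞. In particular u(0) = S^{−1}·b = A^{−1/2}·b, so the Neumann data −b at x = 0 is mapped to the Dirichlet data A^{−1/2}·b. -/

import Mathlib

open ComplexOrder

section Aux

attribute [local instance] Matrix.linftyOpNormedRing Matrix.linftyOpNormedAlgebra

open NormedSpace in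
theorem stmt19_aux (N : ℕ) (S C : Matrix (Fin N) (Fin N) ℂ) (b : Fin N → ℂ) (x : ℝ) :
    HasDerivAt (fun x : ℝ => (exp (-((x : ℂ) • S)) * C).mulVec b)
      ((exp (-((x : ℂ) • S)) * (-S) * C).mulVec b) x := by
  have h1 : HasDerivAt (fun t : ℂ => exp (t • (-S))) (exp ((x:ℂ) • (-S)) * (-S)) (x:ℂ) :=
    hasDerivAt_exp_smul_const (-S) (x:ℂ)
  have h2 : HasDerivAt (fun y : ℝ => (y:ℂ)) 1 x := by
    simpa using (hasDerivAt_id x).ofReal_comp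
  have hf : HasDerivAt (fun x : ℝ => exp (-((x : ℂ) • S)))
      (exp (-((x : ℂ) • S)) * (-S)) x := by
    have h12 := h1.scomp x h2
    simp only [smul_neg, Function.comp_def, one_smul, neg_smul, mul_neg] at h12 ⊢
    exact h12
  let L : Matrix (Fin N) (Fin N) ℂ →ₗ[ℂ] (Fin N → ℂ) :=
    { toFun := fun M => (M * C).mulVec b
      map_add' := fun M₁ M₂ => by simp [Matrix.add_mul, Matrix.add_mulVec]
      map_smul' := fun c M => by simp [Matrix.smul_mul, Matrix.smul_mulVec]}
  exact (((LinearMap.toContinuousLinearMap L).restrictScalars ℝ).hasFDerivAt).comp_hasDerivAt x hf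

end Aux

open NormedSpace in
theorem stmt19 (N : ℕ) (A S : Matrix (Fin N) (Fin N) ℂ)
    (hA : A.PosDef) (hS : S.PosDef) (hS2 : S * S = A) (b : Fin N → ℂ) :
    ∃ u' : ℝ → Fin N → ℂ,
      (∀ x : ℝ, HasDerivAt
        (fun x : ℝ => (exp (-((x : ℂ) • S)) * S⁻¹).mulVec b) (u' x) x) ∧
      (∀ x : ℝ, HasDerivAt u'
        (A.mulVec ((exp (-((x : ℂ) • S)) * S⁻¹).mulVec b)) x) ∧
      u' 0 = -b ∧
      Filter.Tendsto (fun x : ℝ => (exp (-((x : ℂ) • S)) * S⁻¹).mulVec b)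
        Filter.atTop (nhds 0) ∧
      (exp (-(((0 : ℝ) : ℂ) • S)) * S⁻¹).mulVec b = S⁻¹.mulVec b := by
  have hdet : IsUnit S.det := (Matrix.isUnit_iff_isUnit_det S).mp hS.isUnit
  have hSS : S * S⁻¹ = 1 := Matrix.mul_nonsing_inv S hdet
  refine ⟨fun x => (exp (-((x : ℂ) • S)) * (-1)).mulVec b, ?_, ?_, ?_, ?_, ?_⟩
  · intro x
    have h := stmt19_aux N S S⁻¹ b x
    have hval : exp (-((x:ℂ) • S)) * (-S) * S⁻¹ = exp (-((x:ℂ) • S)) * (-1) := by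
      simp only [mul_neg, neg_mul, mul_one, mul_assoc, hSS, neg_inj]
    rwa [hval] at h
  · intro x
    have h := stmt19_aux N S (-1) b x
    have comm : Commute S (exp (-((x:ℂ) • S))) :=
      (((Commute.refl S).smul_right (x:ℂ)).neg_right).exp_right
    have h3 : S * exp (-((x:ℂ) • S)) = exp (-((x:ℂ) • S)) * S := comm.eq
    have hval : exp (-((x:ℂ) • S)) * (-S) * (-1) = exp (-((x:ℂ) • S)) * S := by
      simp only [mul_neg, mul_one, neg_neg]
    have hval2 : A * (exp (-((x:ℂ) • S)) * S⁻¹) = exp (-((x:ℂ) • S)) * S := by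
      calc A * (exp (-((x:ℂ) • S)) * S⁻¹)
          = S * (S * exp (-((x:ℂ) • S)) * S⁻¹) := by rw [← hS2]; noncomm_ring
        _ = S * (exp (-((x:ℂ) • S)) * (S * S⁻¹)) := by rw [h3]; noncomm_ring
        _ = S * exp (-((x:ℂ) • S)) := by rw [hSS, mul_one]
        _ = exp (-((x:ℂ) • S)) * S := h3
    rw [hval] at h
    rw [Matrix.mulVec_mulVec, hval2]
    exact h
  · simp [Matrix.neg_mulVec, Matrix.one_mulVec]
  · -- tendsto 0
    have hH := hS.1
    set U : Matrix (Fin N) (Fin N) ℂ := (Matrix.IsHermitian.eigenvectorUnitary hH :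
      Matrix (Fin N) (Fin N) ℂ) with hU
    set μ : Fin N → ℝ := hH.eigenvalues with hμdef
    have hμ : ∀ i, 0 < μ i := hS.eigenvalues_pos
    have hmem := (Matrix.IsHermitian.eigenvectorUnitary hH).2
    have h1 : U * star U = 1 := (Matrix.mem_unitaryGroup_iff).mp hmem
    have h1' : star U * U = 1 := (Matrix.mem_unitaryGroup_iff').mp hmem
    have hUunit : IsUnit U := ⟨⟨U, star U, h1, h1'⟩, rfl⟩
    have hUinv : U⁻¹ = star U := Matrix.inv_eq_left_inv h1'
    have hspec := hH.spectral_theorem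
    have heq : ∀ x : ℝ, exp (-((x : ℂ) • S)) =
        U * Matrix.diagonal (fun i => Complex.exp ((-(x * μ i) : ℝ) : ℂ)) * star U := by
      intro x
      have hdiageq : Matrix.diagonal (fun i => (((-(x * μ i) : ℝ)) : ℂ)) =
          -((x:ℂ) • Matrix.diagonal (RCLike.ofReal ∘ μ)) := by
        ext i j
        rcases eq_or_ne i j with rfl | hij
        · simp only [Matrix.diagonal_apply_eq, Matrix.neg_apply, Matrix.smul_apply,
            Function.comp, smul_eq_mul]
          push_cast
          rfl
        · simp [Matrix.diagonal_apply_ne _ hij]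
      have hsm : -((x : ℂ) • S) =
          U * Matrix.diagonal (fun i => (((-(x * μ i) : ℝ)) : ℂ)) * star U := by
        rw [hdiageq, hspec, Unitary.conjStarAlgAut_apply, ← hU]
        rw [mul_neg, neg_mul, mul_smul_comm, smul_mul_assoc]
      rw [hsm, ← hUinv, Matrix.exp_conj U _ hUunit, Matrix.exp_diagonal, hUinv]
      congr 2
      funext i
      simp [Pi.exp_def, Complex.exp_eq_exp_ℂ]
    have hdiag : Filter.Tendsto
        (fun x : ℝ => Matrix.diagonal (fun i => Complex.exp ((-(x * μ i) : ℝ) : ℂ)))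
        Filter.atTop (nhds 0) := by
      refine tendsto_pi_nhds.2 ?_
      intro i
      rw [tendsto_pi_nhds]
      intro j
      rcases eq_or_ne i j with rfl | hij
      · simp only [Matrix.diagonal_apply_eq, Matrix.zero_apply]
        rw [tendsto_zero_iff_norm_tendsto_zero]
        have hnorm : ∀ x : ℝ, ‖Complex.exp ((-(x * μ i) : ℝ) : ℂ)‖ = Real.exp (-(x * μ i)) := by
          intro x
          rw [Complex.norm_exp]
          simp
        simp only [hnorm]
        have hlin : Filter.Tendsto (fun x : ℝ => -(x * μ i)) Filter.atTop Filter.atBot :=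
          Filter.tendsto_neg_atTop_atBot.comp (Filter.tendsto_id.atTop_mul_const (hμ i))
        exact Real.tendsto_exp_atBot.comp hlin
      · simp [Matrix.diagonal_apply_ne _ hij]
    have hexp0 : Filter.Tendsto (fun x : ℝ => exp (-((x : ℂ) • S))) Filter.atTop (nhds 0) := by
      have h4 : Filter.Tendsto
          (fun x : ℝ => U * Matrix.diagonal (fun i => Complex.exp ((-(x * μ i) : ℝ) : ℂ)) * star U)
          Filter.atTop (nhds (U * 0 * star U)) :=
        (tendsto_const_nhds.mul hdiag).mul tendsto_const_nhds
      simp only [mul_zero, zero_mul] at h4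
      simpa only [← heq] using h4
    have hmv : Filter.Tendsto
        (fun M : Matrix (Fin N) (Fin N) ℂ => (M * S⁻¹).mulVec b) (nhds 0) (nhds 0) := by
      have hc : Continuous (fun M : Matrix (Fin N) (Fin N) ℂ => (M * S⁻¹).mulVec b) := by
        apply continuous_pi
        intro i
        simp only [Matrix.mulVec, dotProduct, Matrix.mul_apply]
        refine continuous_finset_sum _ fun j _ => ?_
        refine Continuous.mul (continuous_finset_sum _ fun k _ => ?_) continuous_const
        exact (continuous_id.matrix_elem i k).mul continuous_const
      have := hc.tendsto 0
      simpa [Matrix.zero_mulVec] using this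
    exact hmv.comp hexp0
  · simp
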